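/- arXiv:2603.02326 — 3 statements merged into one kernel-verified Lean document; each statement's English description precedes it below -/
import Mathlib

section
/- The 3×3 matrix Ũ^(3) with rows (x²y², y(1−x²), x(1−y²)), (y(1−x²), x², 0), (x(1−y²), 0, y²), for 0 < x, y < 1, satisfies [(I − Ũ^(3))^{-1}]_{1,1} = 1/((1−x²)(1−y²)). -/
/-- For `0 < x, y < 1`, the transfer-matrix block
`Ũ⁽³⁾ = [[x²y², y(1-x²), x(1-y²)], [y(1-x²), x², 0], [x(1-y²), 0, y²]]`
satisfies: `1 - Ũ⁽³⁾` is invertible and `[(1 - Ũ⁽³⁾)⁻¹]₁₁ = 1/((1-x²)(1-y²))`. -/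
theorem fendley_szm_norm_transfer_entry (x y : ℝ)
    (hx0 : 0 < x) (hx1 : x < 1) (hy0 : 0 < y) (hy1 : y < 1) :
    let U : Matrix (Fin 3) (Fin 3) ℝ :=
      !![x ^ 2 * y ^ 2, y * (1 - x ^ 2), x * (1 - y ^ 2);
         y * (1 - x ^ 2), x ^ 2, 0;
         x * (1 - y ^ 2), 0, y ^ 2]
    IsUnit (1 - U).det ∧ (1 - U)⁻¹ 0 0 = 1 / ((1 - x ^ 2) * (1 - y ^ 2)) := by
  intro U
  have hx2 : (0:ℝ) < 1 - x ^ 2 := by nlinarith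
  have hy2 : (0:ℝ) < 1 - y ^ 2 := by nlinarith
  have hM : (1 : Matrix (Fin 3) (Fin 3) ℝ) - U =
      !![1 - x ^ 2 * y ^ 2, -(y * (1 - x ^ 2)), -(x * (1 - y ^ 2));
         -(y * (1 - x ^ 2)), 1 - x ^ 2, 0;
         -(x * (1 - y ^ 2)), 0, 1 - y ^ 2] := by
    show (1 : Matrix (Fin 3) (Fin 3) ℝ) - U = _
    ext i j
    fin_cases i <;> fin_cases j <;>
      simp [U, Matrix.one_apply, Matrix.sub_apply] <;> ring
  have hdet : ((1 : Matrix (Fin 3) (Fin 3) ℝ) - U).det =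
      ((1 - x ^ 2) * (1 - y ^ 2)) ^ 2 := by
    rw [hM, Matrix.det_fin_three]
    simp [Matrix.cons_val_zero, Matrix.cons_val_one]
    ring
  have hdne : ((1 - x ^ 2) * (1 - y ^ 2)) ^ 2 ≠ 0 := by positivity
  have hunit : IsUnit ((1 : Matrix (Fin 3) (Fin 3) ℝ) - U).det := by
    rw [hdet]; exact (isUnit_iff_ne_zero).2 hdne
  refine ⟨hunit, ?_⟩
  rw [Matrix.inv_def, Matrix.smul_apply, Ring.inverse_eq_inv', hdet]
  rw [hM, Matrix.adjugate_fin_three]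
  simp [Matrix.cons_val_zero, Matrix.cons_val_one]
  field_simp
end

section
/- On a chain of L qubits with open boundary conditions, the operator Ψ^ℓ(q) = Σ_{j=1}^L q^{j-1} (Π_{i=1}^{j-1} Z_i) X_j commutes with every generator T_{j,j+1} = X_j X_{j+1} + q Z_j for 1 ≤ j ≤ L−1, and also commutes with X_L. -/
open Matrix

/-- Pauli X matrix. -/
noncomputable def PX : Matrix (Fin 2) (Fin 2) ℂ := !![0, 1; 1, 0]

/-- Pauli Y matrix. -/
noncomputable def PY : Matrix (Fin 2) (Fin 2) ℂ := !![0, -Complex.I; Complex.I, 0]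

/-- Pauli Z matrix. -/
noncomputable def PZ : Matrix (Fin 2) (Fin 2) ℂ := !![1, 0; 0, -1]

/-- Tensor product of one-qubit operators `f i` across a chain of `L` qubits,
as a matrix on `(ℂ²)^{⊗L}` (indexed by `Fin L → Fin 2`). -/
noncomputable def prodOp (L : ℕ) (f : Fin L → Matrix (Fin 2) (Fin 2) ℂ) :
    Matrix (Fin L → Fin 2) (Fin L → Fin 2) ℂ :=
  Matrix.of fun a b => ∏ i, f i (a i) (b i)

/-- A single-site operator `M` acting on site `j` of a chain of `L` qubits. -/
noncomputable def onSite (L : ℕ) (M : Matrix (Fin 2) (Fin 2) ℂ) (j : Fin L) :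
    Matrix (Fin L → Fin 2) (Fin L → Fin 2) ℂ :=
  prodOp L (fun i => if i = j then M else 1)


/-- The Ising strong zero mode `Ψ^ℓ(q) = Σ_j q^{j-1} (Π_{i<j} Z_i) X_j` on a
chain of `L` qubits (here written as a tensor product with `Z` on sites
`i < j`, `X` on site `j`, identity elsewhere). -/
noncomputable def isingSZM (L : ℕ) (q : ℝ) :
    Matrix (Fin L → Fin 2) (Fin L → Fin 2) ℂ :=
  ∑ j : Fin L, (q : ℂ) ^ (j : ℕ) •
    prodOp L (fun i => if i = j then PX else if i < j then PZ else 1)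

lemma prodOp_mul (L : ℕ) (f g : Fin L → Matrix (Fin 2) (Fin 2) ℂ) :
    prodOp L f * prodOp L g = prodOp L (fun i => f i * g i) := by
  ext a b
  simp only [prodOp, Matrix.mul_apply, Matrix.of_apply]
  rw [← Fintype.piFinset_univ, Finset.prod_univ_sum]
  exact Finset.sum_congr rfl fun c _ => (Finset.prod_mul_distrib).symm

lemma prodOp_scale (L : ℕ) (f g : Fin L → Matrix (Fin 2) (Fin 2) ℂ) (s : Fin L → ℂ)
    (h : ∀ i, f i = s i • g i) :
    prodOp L f = (∏ i, s i) • prodOp L g := by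
  ext a b
  simp only [prodOp, Matrix.of_apply, Matrix.smul_apply, smul_eq_mul]
  rw [← Finset.prod_mul_distrib]
  exact Finset.prod_congr rfl fun i _ => by rw [h i]; rfl

lemma prodOp_comm (L : ℕ) (f g : Fin L → Matrix (Fin 2) (Fin 2) ℂ)
    (h : ∀ i, f i * g i = g i * f i) :
    prodOp L f * prodOp L g = prodOp L g * prodOp L f := by
  rw [prodOp_mul, prodOp_mul]
  exact congrArg _ (funext h)

lemma pXX : PX * PX = 1 := by
  simp [PX, Matrix.mul_fin_two, Matrix.one_fin_two]

lemma pZX : PZ * PX = (-1 : ℂ) • (PX * PZ) := by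
  simp [PX, PZ, Matrix.mul_fin_two, Matrix.smul_of]

lemma pXZ : PX * PZ = (-1 : ℂ) • (PZ * PX) := by
  rw [pZX]; simp

set_option maxRecDepth 4000 in
/-- The Ising strong zero mode commutes with every generator
`T_{j,j+1} = X_j X_{j+1} + q Z_j` (for `1 ≤ j ≤ L-1`) and with `X_L`. -/
theorem ising_szm_commutes (L : ℕ) (hL : 0 < L) (q : ℝ) :
    (∀ (j : Fin L) (hj : (j : ℕ) + 1 < L),
        isingSZM L q *
            (onSite L PX j * onSite L PX ⟨(j : ℕ) + 1, hj⟩ + (q : ℂ) • onSite L PZ j) =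
          (onSite L PX j * onSite L PX ⟨(j : ℕ) + 1, hj⟩ + (q : ℂ) • onSite L PZ j) *
            isingSZM L q) ∧
      isingSZM L q * onSite L PX ⟨L - 1, by omega⟩ =
        onSite L PX ⟨L - 1, by omega⟩ * isingSZM L q := by
  classical
  set ψ : Fin L → Fin L → Matrix (Fin 2) (Fin 2) ℂ :=
    fun k i => if i = k then PX else if i < k then PZ else 1 with hψ
  have hSZM : isingSZM L q = ∑ k : Fin L, (q : ℂ) ^ (k : ℕ) • prodOp L (ψ k) := rfl
  constructor
  · intro j hj
    set j' : Fin L := ⟨(j : ℕ) + 1, hj⟩ with hj'def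
    have hj'val : (j' : ℕ) = (j : ℕ) + 1 := rfl
    have hjj' : j ≠ j' := by
      intro h; have := congrArg Fin.val h; omega
    set xxF : Fin L → Matrix (Fin 2) (Fin 2) ℂ :=
      fun i => if i = j then PX else if i = j' then PX else 1 with hxxF
    set zF : Fin L → Matrix (Fin 2) (Fin 2) ℂ :=
      fun i => if i = j then PZ else 1 with hzF
    have hZ : onSite L PZ j = prodOp L zF := rfl
    have hXXop : onSite L PX j * onSite L PX j' = prodOp L xxF := by
      rw [onSite, onSite, prodOp_mul]
      refine congrArg (prodOp L) (funext fun i => ?_)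
      simp only [hxxF]
      split_ifs <;>
        first          | (exfalso; simp only [Fin.ext_iff, Fin.lt_def, hj'val,              show ((⟨(j : ℕ) + 1, hj⟩ : Fin L) : ℕ) = (j : ℕ) + 1 from rfl] at *; omega)          | rfl          | simp
    set Cxx : Fin L → Matrix (Fin L → Fin 2) (Fin L → Fin 2) ℂ :=
      fun k => prodOp L (ψ k) * prodOp L xxF - prodOp L xxF * prodOp L (ψ k) with hCxx
    set Cz : Fin L → Matrix (Fin L → Fin 2) (Fin L → Fin 2) ℂ :=
      fun k => prodOp L (ψ k) * prodOp L zF - prodOp L zF * prodOp L (ψ k) with hCz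
    have keyZ : ∀ k : Fin L, k ≠ j → Cz k = 0 := by
      intro k hk
      have hkj : (k : ℕ) ≠ (j : ℕ) := fun h => hk (Fin.ext h)
      simp only [hCz, sub_eq_zero]
      apply prodOp_comm
      intro i
      simp only [hψ, hzF]
      split_ifs <;>
        first          | (exfalso; simp only [Fin.ext_iff, Fin.lt_def, hj'val,              show ((⟨(j : ℕ) + 1, hj⟩ : Fin L) : ℕ) = (j : ℕ) + 1 from rfl] at *; omega)          | rfl          | simp
    have keyXX : ∀ k : Fin L, k ≠ j' → Cxx k = 0 := by
      intro k hk
      have hkj' : (k : ℕ) ≠ (j : ℕ) + 1 := fun h => hk (Fin.ext (by omega))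
      simp only [hCxx, sub_eq_zero]
      rcases le_or_gt (k : ℕ) (j : ℕ) with hle | hgt
      · apply prodOp_comm
        intro i
        simp only [hψ, hxxF]
        split_ifs <;>
          first            | (exfalso; simp only [Fin.ext_iff, Fin.lt_def, hj'val,                show ((⟨(j : ℕ) + 1, hj⟩ : Fin L) : ℕ) = (j : ℕ) + 1 from rfl] at *; omega)            | rfl            | simp
      · have hgt' : (j : ℕ) + 1 < (k : ℕ) := by omega
        rw [prodOp_mul, prodOp_mul]
        have hpt : ∀ i, ψ k i * xxF i =
            ((if i = j then (-1 : ℂ) else 1) * (if i = j' then (-1 : ℂ) else 1)) •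
              (xxF i * ψ k i) := by
          intro i
          simp only [hψ, hxxF]
          split_ifs <;>
            first              | (exfalso; simp only [Fin.ext_iff, Fin.lt_def, hj'val,                  show ((⟨(j : ℕ) + 1, hj⟩ : Fin L) : ℕ) = (j : ℕ) + 1 from rfl] at *; omega)              | rfl              | simp [pXX, pZX]
        rw [prodOp_scale L _ _ _ hpt]
        rw [Finset.prod_mul_distrib, Finset.prod_ite_eq' Finset.univ j fun _ => (-1 : ℂ),
          Finset.prod_ite_eq' Finset.univ j' fun _ => (-1 : ℂ)]
        simp
    have hA : prodOp L (fun i => ψ j i * zF i) =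
        (-1 : ℂ) • prodOp L (fun i => ψ j' i * xxF i) := by
      have hpt : ∀ i, ψ j i * zF i =
          (if i = j then (-1 : ℂ) else 1) • (ψ j' i * xxF i) := by
        intro i
        simp only [hψ, hzF, hxxF]
        split_ifs <;>
          first            | (exfalso; simp only [Fin.ext_iff, Fin.lt_def, hj'val,                show ((⟨(j : ℕ) + 1, hj⟩ : Fin L) : ℕ) = (j : ℕ) + 1 from rfl] at *; omega)            | rfl            | simp [pXX, pZX]
      rw [prodOp_scale L _ _ _ hpt, Finset.prod_ite_eq' Finset.univ j fun _ => (-1 : ℂ)]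
      simp
    have hA' : prodOp L (fun i => zF i * ψ j i) =
        (-1 : ℂ) • prodOp L (fun i => xxF i * ψ j' i) := by
      have hpt : ∀ i, zF i * ψ j i =
          (if i = j then (-1 : ℂ) else 1) • (xxF i * ψ j' i) := by
        intro i
        simp only [hψ, hzF, hxxF]
        split_ifs <;>
          first            | (exfalso; simp only [Fin.ext_iff, Fin.lt_def, hj'val,                show ((⟨(j : ℕ) + 1, hj⟩ : Fin L) : ℕ) = (j : ℕ) + 1 from rfl] at *; omega)            | rfl            | simp [pXX, pZX]
      rw [prodOp_scale L _ _ _ hpt, Finset.prod_ite_eq' Finset.univ j fun _ => (-1 : ℂ)]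
      simp
    have hcancel : Cz j + Cxx j' = 0 := by
      simp only [hCz, hCxx, prodOp_mul]
      rw [hA, hA']
      module
    rw [hSZM, hXXop, hZ, ← sub_eq_zero, Finset.sum_mul, Finset.mul_sum,
      ← Finset.sum_sub_distrib]
    have hterm : ∀ k : Fin L,
        ((q : ℂ) ^ (k : ℕ) • prodOp L (ψ k)) * (prodOp L xxF + (q : ℂ) • prodOp L zF) -
          (prodOp L xxF + (q : ℂ) • prodOp L zF) * ((q : ℂ) ^ (k : ℕ) • prodOp L (ψ k)) =
        (q : ℂ) ^ (k : ℕ) • Cxx k + (q : ℂ) ^ ((k : ℕ) + 1) • Cz k := by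
      intro k
      simp only [hCxx, hCz, pow_succ]
      simp only [mul_add, add_mul, smul_mul_assoc, mul_smul_comm, smul_sub, smul_add,
        smul_smul]
      module
    simp only [hterm]
    rw [← Finset.sum_subset (Finset.subset_univ ({j, j'} : Finset (Fin L)))
      (fun k _ hk => by
        simp only [Finset.mem_insert, Finset.mem_singleton, not_or] at hk
        rw [keyZ k hk.1, keyXX k hk.2, smul_zero, smul_zero, add_zero])]
    rw [Finset.sum_pair hjj']
    rw [keyXX j hjj', keyZ j' (fun h => hjj' h.symm), smul_zero, smul_zero, add_zero,
      zero_add, hj'val]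
    rw [← smul_add, hcancel, smul_zero]
  · set l : Fin L := ⟨L - 1, by omega⟩ with hl
    have hlval : (l : ℕ) = L - 1 := rfl
    have hX : onSite L PX l = prodOp L (fun i => if i = l then PX else 1) := rfl
    rw [hSZM, hX, Finset.sum_mul, Finset.mul_sum]
    refine Finset.sum_congr rfl fun k _ => ?_
    rw [smul_mul_assoc, mul_smul_comm]
    congr 1
    apply prodOp_comm
    intro i
    have hk2 : (k : ℕ) < L := k.isLt
    simp only [hψ]
    split_ifs <;>
      first        | (exfalso; simp only [Fin.ext_iff, Fin.lt_def, hlval,            show ((⟨L - 1, by omega⟩ : Fin L) : ℕ) = L - 1 from rfl] at *; omega)        | rfl        | simp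
end

section
/- The L×L matrix P with P_{jj} = 4q(q + q^{-1}) for 2 ≤ j ≤ L−1, P_{11} = 4q·q, P_{LL} = 4q·q^{-1}, and P_{j,j+1} = P_{j+1,j} = −4q for 1 ≤ j ≤ L−1 (all other entries zero) has the vector v_j = q^{j-1} as an eigenvector with eigenvalue 0, and has eigenvalues λ_m = 4[q² + 1 − 2q cos(mπ/L)] for m = 1, ..., L−1. -/
lemma tridiag_sum (L : ℕ) (d b : ℝ) (w : Fin L → ℝ) (i : Fin L) :
    ∑ j : Fin L, (if (i : ℕ) = (j : ℕ) then d
      else if (i : ℕ) + 1 = (j : ℕ) ∨ (j : ℕ) + 1 = (i : ℕ) then b else 0) * w j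
    = d * w i
      + (if h : (i : ℕ) + 1 < L then b * w ⟨(i : ℕ) + 1, h⟩ else 0)
      + (if h : 1 ≤ (i : ℕ) then
          b * w ⟨(i : ℕ) - 1, lt_trans (Nat.sub_lt (lt_of_lt_of_le Nat.zero_lt_one h) Nat.zero_lt_one) i.isLt⟩ else 0) := by
  have key : ∀ j : Fin L,
      (if (i : ℕ) = (j : ℕ) then d
        else if (i : ℕ) + 1 = (j : ℕ) ∨ (j : ℕ) + 1 = (i : ℕ) then b else 0) * w j
      = (if i = j then d * w j else 0)
        + (if (i : ℕ) + 1 = (j : ℕ) then b * w j else 0)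
        + (if (j : ℕ) + 1 = (i : ℕ) then b * w j else 0) := by
    intro j
    by_cases h1 : (i : ℕ) = (j : ℕ)
    · simp [h1, Fin.ext_iff, (by omega : ¬ ((i:ℕ)+1 = (j:ℕ))), (by omega : ¬ ((j:ℕ)+1 = (i:ℕ)))]
    · by_cases h2 : (i : ℕ) + 1 = (j : ℕ)
      · simp [h1, h2, Fin.ext_iff]
        intro hc; exact absurd hc (by omega)
      · by_cases h3 : (j : ℕ) + 1 = (i : ℕ) <;> simp [h1, h2, h3, Fin.ext_iff]
  rw [Finset.sum_congr rfl (fun j _ => key j)]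
  rw [Finset.sum_add_distrib, Finset.sum_add_distrib]
  congr 1
  · congr 1
    · simp [Finset.sum_ite_eq]
    · by_cases h : (i : ℕ) + 1 < L
      · rw [dif_pos h, Finset.sum_eq_single (⟨(i:ℕ)+1, h⟩ : Fin L)]
        · simp
        · intro j _ hj
          rw [if_neg]
          intro hc; exact hj (Fin.ext hc.symm)
        · simp
      · rw [dif_neg h, Finset.sum_eq_zero]
        intro j _
        rw [if_neg]
        intro hc; exact h (hc ▸ j.isLt)
  · by_cases h : 1 ≤ (i : ℕ)
    · rw [dif_pos h, Finset.sum_eq_single (⟨(i:ℕ)-1, by omega⟩ : Fin L)]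
      · simp; intro hc; omega
      · intro j _ hj
        rw [if_neg]
        intro hc; apply hj; apply Fin.ext; simp; omega
      · simp
    · rw [dif_neg h, Finset.sum_eq_zero]
      intro j _
      rw [if_neg]; omega

lemma sin_shift (x t : ℝ) : Real.sin (x + t) + Real.sin (x - t)
    = 2 * Real.cos t * Real.sin x := by
  rw [Real.sin_add, Real.sin_sub]; ring

/-- Spectrum of the Ising-SZM super-Hamiltonian restricted to single-Majorana
operators: the tridiagonal matrix with diagonal `4q·q, 4q(q+q⁻¹), …, 4q·q⁻¹`
and off-diagonal entries `-4q` has `v_j = q^{j-1}` as a zero mode and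
eigenvalues `λ_m = 4[q² + 1 - 2q cos(mπ/L)]` for `m = 1, …, L-1`. -/
theorem ising_szm_superhamiltonian_spectrum (L : ℕ) (hL : 2 ≤ L) (q : ℝ)
    (hq : 0 < q) :
    let P : Matrix (Fin L) (Fin L) ℝ := Matrix.of fun i j =>
      if (i : ℕ) = (j : ℕ) then
        (if (i : ℕ) = 0 then 4 * q * q
         else if (i : ℕ) = L - 1 then 4 * q * q⁻¹
         else 4 * q * (q + q⁻¹))
      else if (i : ℕ) + 1 = (j : ℕ) ∨ (j : ℕ) + 1 = (i : ℕ) then -(4 * q) else 0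
    P.mulVec (fun j => q ^ (j : ℕ)) = 0 ∧
      ∀ m : ℕ, 1 ≤ m → m ≤ L - 1 →
        Module.End.HasEigenvalue (Matrix.toLin' P)
          (4 * (q ^ 2 + 1 - 2 * q * Real.cos (m * Real.pi / L))) := by
  intro P
  have hq0 : q ≠ 0 := ne_of_gt hq
  constructor
  · funext i
    show (∑ j : Fin L, P i j * q ^ (j : ℕ)) = 0
    have heq : ∀ j : Fin L, P i j * q ^ (j : ℕ) =
        (if (i : ℕ) = (j : ℕ) then
          (if (i : ℕ) = 0 then 4 * q * q
           else if (i : ℕ) = L - 1 then 4 * q * q⁻¹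
           else 4 * q * (q + q⁻¹))
        else if (i : ℕ) + 1 = (j : ℕ) ∨ (j : ℕ) + 1 = (i : ℕ) then -(4 * q) else 0)
          * (fun j : Fin L => q ^ (j : ℕ)) j := fun j => rfl
    rw [Finset.sum_congr rfl (fun j _ => heq j), tridiag_sum]
    by_cases h0 : (i : ℕ) = 0
    · rw [if_pos h0, dif_pos (by omega : (i:ℕ)+1 < L), dif_neg (by omega)]
      simp only [h0]
      ring
    · rw [if_neg h0, dif_pos (by omega : 1 ≤ (i:ℕ))]
      obtain ⟨k, hk⟩ : ∃ k, (i : ℕ) = k + 1 := ⟨(i:ℕ)-1, by omega⟩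
      by_cases hl : (i : ℕ) = L - 1
      · rw [if_pos hl, dif_neg (by omega : ¬ ((i:ℕ)+1 < L))]
        simp only [hk, Nat.add_sub_cancel, pow_succ]
        field_simp
        ring
      · rw [if_neg hl, dif_pos (by omega : (i:ℕ)+1 < L)]
        simp only [hk, Nat.add_sub_cancel, pow_succ]
        field_simp
        ring
  · intro m hm1 hm2
    set θ : ℝ := m * Real.pi / L with hθ
    have hLpos : (0:ℝ) < L := by positivity
    have hθpos : 0 < θ := by
      have hm : (1:ℝ) ≤ m := by exact_mod_cast hm1
      have h1 : 0 < (m:ℝ) * Real.pi := by nlinarith [Real.pi_pos]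
      exact div_pos h1 hLpos
    have hθlt : θ < Real.pi := by
      rw [hθ, div_lt_iff₀ hLpos]
      have hmL : (m:ℝ) < L := by exact_mod_cast (by omega : m < L)
      nlinarith [Real.pi_pos]
    have hsin : 0 < Real.sin θ := Real.sin_pos_of_pos_of_lt_pi hθpos hθlt
    have hLθ : (L:ℝ) * θ = m * Real.pi := by
      rw [hθ]; field_simp
    have hsinL : Real.sin ((L:ℝ) * θ) = 0 := by
      rw [hLθ]; exact Real.sin_nat_mul_pi m
    have hr : q * q⁻¹ = 1 := mul_inv_cancel₀ hq0
    set v : Fin L → ℝ := fun i => Real.sin (((i:ℕ) + 1 : ℝ) * θ)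
        - q⁻¹ * Real.sin (((i:ℕ) : ℝ) * θ) with hv
    apply Module.End.hasEigenvalue_of_hasEigenvector (x := v)
    constructor
    · rw [Module.End.mem_eigenspace_iff, Matrix.toLin'_apply]
      funext i
      show (∑ j : Fin L, P i j * v j) = _
      have heq : ∀ j : Fin L, P i j * v j =
          (if (i : ℕ) = (j : ℕ) then
            (if (i : ℕ) = 0 then 4 * q * q
             else if (i : ℕ) = L - 1 then 4 * q * q⁻¹
             else 4 * q * (q + q⁻¹))
          else if (i : ℕ) + 1 = (j : ℕ) ∨ (j : ℕ) + 1 = (i : ℕ) then -(4 * q) else 0)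
            * v j := fun j => rfl
      rw [Finset.sum_congr rfl (fun j _ => heq j), tridiag_sum]
      show _ = (4 * (q ^ 2 + 1 - 2 * q * Real.cos θ)) * v i
      have key : ∀ x : ℝ, Real.sin (x + θ) + Real.sin (x - θ)
          = 2 * Real.cos θ * Real.sin x := fun x => sin_shift x θ
      by_cases h0 : (i : ℕ) = 0
      · rw [if_pos h0, dif_pos (by omega : (i:ℕ)+1 < L), dif_neg (by omega)]
        simp only [hv, h0]
        push_cast
        norm_num
        rw [show (2:ℝ) * θ = θ + θ by ring]
        have h2 := key θ
        rw [sub_self, Real.sin_zero] at h2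
        linear_combination (-(4*q)) * h2 + 4 * Real.sin θ * hr
      · rw [if_neg h0, dif_pos (by omega : 1 ≤ (i:ℕ))]
        have hcast : (((i:ℕ) - 1 : ℕ) : ℝ) = ((i:ℕ):ℝ) - 1 := by
          push_cast [Nat.cast_sub (by omega : 1 ≤ (i:ℕ))]; ring
        by_cases hl : (i : ℕ) = L - 1
        · rw [if_pos hl, dif_neg (by omega : ¬ ((i:ℕ)+1 < L))]
          simp only [hv, hcast]
          have hiL : ((i:ℕ):ℝ) = (L:ℝ) - 1 := by
            rw [hl]; push_cast [Nat.cast_sub (by omega : 1 ≤ L)]; ring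
          rw [hiL]
          rw [show ((L:ℝ) - 1 + 1) * θ = (L:ℝ) * θ by ring, hsinL]
          rw [show ((L:ℝ) - 1 - 1 + 1) * θ = (L:ℝ) * θ - θ by ring]
          rw [show ((L:ℝ) - 1 - 1) * θ = ((L:ℝ)-1)*θ - θ by ring]
          have h2 : Real.sin (((L:ℝ) - 1) * θ + θ) + Real.sin (((L:ℝ) - 1) * θ - θ)
              = 2 * Real.cos θ * Real.sin (((L:ℝ) - 1) * θ) := key _
          rw [show ((L:ℝ)-1)*θ + θ = (L:ℝ)*θ by ring, hsinL] at h2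
          have h3 : Real.sin ((L:ℝ)*θ - θ) = Real.sin (((L:ℝ)-1)*θ) := by
            congr 1; ring
          rw [h3]
          linear_combination (4*q*q⁻¹) * h2
            + (4*q*Real.sin (((L:ℝ)-1)*θ) - 4*q⁻¹*Real.sin (((L:ℝ)-1)*θ)) * hr
        · rw [if_neg hl, dif_pos (by omega : (i:ℕ)+1 < L)]
          simp only [hv, hcast]
          push_cast
          set x : ℝ := ((i:ℕ):ℝ) with hx
          rw [show x - 1 + 1 = x by ring]
          have h2 := key (x * θ)
          have h3 := key ((x + 1) * θ)
          rw [show x*θ + θ = (x+1)*θ by ring, show x*θ - θ = (x-1)*θ by ring] at h2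
          rw [show (x+1)*θ + θ = (x+1+1)*θ by ring, show (x+1)*θ - θ = x*θ by ring] at h3
          linear_combination (4*q*q⁻¹) * h2 + (-(4*q)) * h3
            + (4*Real.sin ((x+1)*θ) - 4*q⁻¹*Real.sin (x*θ)) * hr
    · intro hv0
      have h00 : v ⟨0, by omega⟩ = 0 := by rw [hv0]; rfl
      simp only [hv] at h00
      norm_num at h00
      exact absurd h00 (ne_of_gt hsin)
end
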